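/- arXiv:1911.09621 — 3 statements merged into one kernel-verified Lean document; each statement's English description precedes it below -/
import Mathlib

section
/- Fix k ∈ ℤ, k ≠ 0, and a nondegenerate triangle K ⊂ {(r,z) : r > 0} with edges e₁,e₂,e₃ and outward unit normals n₁,n₂,n₃. The four linear functionals σ_K(u) = (1/|K|)∫_K (k u_θ − u_r)/r dA and σ_{eᵢ}(u) = ∫_{eᵢ}(u_r,u_z)·nᵢ ds (i = 1,2,3) form a unisolvent set of degrees of freedom on the 4-dimensional polynomial space C₁ = {(kγ₁ + γ₂r, γ₁ + γ₃r, γ₄ + γ₂z) : γᵢ ∈ ℝ}; i.e., the map u ↦ (σ_K(u), σ_{e₁}(u), σ_{e₂}(u), σ_{e₃}(u)) is a linear isomorphism from C₁ to ℝ⁴. -/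
open MeasureTheory

/-- Two vectors perpendicular to the same unit vector are parallel. -/
lemma perp_perp_aux (w1 w2 d1 d2 n1 n2 : ℝ) (hn : n1^2 + n2^2 = 1)
    (hw : w1*n1 + w2*n2 = 0) (hd : n1*d1 + n2*d2 = 0) : w1*d2 - w2*d1 = 0 := by
  linear_combination (d2*n1 - d1*n2)*hw + (w1*n2 - w2*n1)*hd - (w1*d2 - w2*d1)*hn

/-- The cross product of edge vectors of a nondegenerate triangle is nonzero. -/
lemma tri_cross_aux (a : Fin 3 → ℝ×ℝ) (h : AffineIndependent ℝ a) :
    ((a 1).1 - (a 0).1) * ((a 2).2 - (a 0).2)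
      - ((a 1).2 - (a 0).2) * ((a 2).1 - (a 0).1) ≠ 0 := by
  intro hc
  have key : ∀ l m : ℝ, l • (a 1 - a 0) + m • (a 2 - a 0) = 0 → l = 0 ∧ m = 0 := by
    intro l m hlm
    have hw := affineIndependent_iff.mp h Finset.univ ![-(l+m), l, m]
      (by simp [Fin.sum_univ_three])
      (by
        rw [Fin.sum_univ_three]
        have h2 : l • (a 1 - a 0) + m • (a 2 - a 0)
            = (-(l+m)) • a 0 + l • a 1 + m • a 2 := by module
        rw [h2] at hlm
        simpa using hlm)
    exact ⟨by simpa using hw 1 (Finset.mem_univ _), by simpa using hw 2 (Finset.mem_univ _)⟩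
  have h1 : a 1 - a 0 ≠ 0 := by
    intro h0
    have := (key 1 0 (by simp [h0])).1
    norm_num at this
  have h1' : (a 1 - a 0).1 ≠ 0 ∨ (a 1 - a 0).2 ≠ 0 := by
    by_contra hq
    push_neg at hq
    exact h1 (Prod.ext hq.1 hq.2)
  rcases h1' with h2 | h2
  · have hker : (a 2 - a 0).1 • (a 1 - a 0) + (-(a 1 - a 0).1) • (a 2 - a 0) = 0 := by
      apply Prod.ext
      · simp; ring
      · simp; linear_combination -hc
    exact h2 (by have := (key _ _ hker).2; linarith [neg_eq_zero.mp this])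
  · have hker : (a 2 - a 0).2 • (a 1 - a 0) + (-(a 1 - a 0).2) • (a 2 - a 0) = 0 := by
      apply Prod.ext
      · simp; linear_combination hc
      · simp; ring
    exact h2 (by have := (key _ _ hker).2; linarith [neg_eq_zero.mp this])

lemma const_interval_int_aux (f : ℝ → ℝ) (c : ℝ) (hf : ∀ t, f t = c) :
    (∫ t in (0:ℝ)..1, f t) = c := by
  rw [funext hf, intervalIntegral.integral_const, smul_eq_mul]; ring

/-- unisolvence of the degrees of freedom
σ_K(u) = (1/|K|)∫_K (k u_θ − u_r)/r dA and σ_{eᵢ}(u) = ∫_{eᵢ}(u_r,u_z)·nᵢ ds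
on the 4-dimensional local space C₁ = {(kγ₁ + γ₂r, γ₁ + γ₃r, γ₄ + γ₂z)}:
the DOF map is a linear isomorphism from C₁ (≅ ℝ⁴ via coefficients) onto ℝ⁴. -/
theorem stmt_8 (k : ℤ) (hk : k ≠ 0) (a : Fin 3 → ℝ × ℝ)
    (haff : AffineIndependent ℝ a)
    (hpos : ∀ p ∈ convexHull ℝ (Set.range a), 0 < p.1)
    (n : Fin 3 → ℝ × ℝ)
    (hunit : ∀ i, (n i).1 ^ 2 + (n i).2 ^ 2 = 1)
    (hperp : ∀ i,
      (n i).1 * (a (i + 2) - a (i + 1)).1 + (n i).2 * (a (i + 2) - a (i + 1)).2 = 0)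
    (hout : ∀ i,
      (n i).1 * (a i - a (i + 1)).1 + (n i).2 * (a i - a (i + 1)).2 < 0) :
    let K : Set (ℝ × ℝ) := convexHull ℝ (Set.range a)
    let C1 : (ℝ × ℝ × ℝ × ℝ) → (ℝ × ℝ) → ℝ × ℝ × ℝ := fun γ p =>
      ((k : ℝ) * γ.1 + γ.2.1 * p.1, γ.1 + γ.2.2.1 * p.1, γ.2.2.2 + γ.2.1 * p.2)
    let len : Fin 3 → ℝ := fun i =>
      Real.sqrt ((a (i + 2) - a (i + 1)).1 ^ 2 + (a (i + 2) - a (i + 1)).2 ^ 2)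
    let σe : (ℝ × ℝ × ℝ × ℝ) → Fin 3 → ℝ := fun γ i =>
      (∫ t in (0:ℝ)..1,
          ((C1 γ (a (i + 1) + t • (a (i + 2) - a (i + 1)))).1 * (n i).1
            + (C1 γ (a (i + 1) + t • (a (i + 2) - a (i + 1)))).2.2 * (n i).2)) * len i
    let σK : (ℝ × ℝ × ℝ × ℝ) → ℝ := fun γ =>
      (∫ p in K, ((k : ℝ) * (C1 γ p).2.1 - (C1 γ p).1) / p.1) / (volume K).toReal
    let Φ : (ℝ × ℝ × ℝ × ℝ) → ℝ × ℝ × ℝ × ℝ := fun γ => (σK γ, σe γ 0, σe γ 1, σe γ 2)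
    IsLinearMap ℝ Φ ∧ Function.Bijective Φ := by
  intro K C1 len σe σK Φ
  have hinj := haff.injective
  -- volume facts
  have hspan : affineSpan ℝ (Set.range a) = ⊤ :=
    haff.affineSpan_eq_top_iff_card_eq_finrank_add_one.mpr (by simp)
  have hKmeas : MeasurableSet K :=
    ((Set.finite_range a).isCompact_convexHull ℝ).isClosed.measurableSet
  have hvolpos : 0 < volume K :=
    lt_of_lt_of_le
      (isOpen_interior.measure_pos volume
        (interior_convexHull_nonempty_iff_affineSpan_eq_top.mpr hspan))
      (measure_mono interior_subset)
  have hvne : (volume K).toReal ≠ 0 :=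
    (ENNReal.toReal_pos hvolpos.ne' ((Set.finite_range a).isCompact_convexHull ℝ).measure_lt_top.ne).ne'
  -- closed form for σK
  have hσK : ∀ γ : ℝ × ℝ × ℝ × ℝ, σK γ = (k:ℝ) * γ.2.2.1 - γ.2.1 := by
    intro γ
    have h1 : (∫ p in K, ((k : ℝ) * (C1 γ p).2.1 - (C1 γ p).1) / p.1)
        = ∫ _ in K, ((k:ℝ) * γ.2.2.1 - γ.2.1) := by
      apply setIntegral_congr_fun hKmeas
      intro p hp
      have hr := (hpos p hp).ne'
      show ((k:ℝ) * (γ.1 + γ.2.2.1 * p.1) - ((k:ℝ) * γ.1 + γ.2.1 * p.1)) / p.1 = _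
      field_simp
      ring
    show (∫ p in K, ((k : ℝ) * (C1 γ p).2.1 - (C1 γ p).1) / p.1) / (volume K).toReal = _
    rw [h1, setIntegral_const, smul_eq_mul, mul_comm, mul_div_assoc, measureReal_def, div_self hvne, mul_one]
  -- closed form for σe
  have hσe : ∀ (γ : ℝ × ℝ × ℝ × ℝ) (i : Fin 3), σe γ i
      = ((k:ℝ)*γ.1*(n i).1 + γ.2.2.2*(n i).2
          + γ.2.1*((a (i+1)).1*(n i).1 + (a (i+1)).2*(n i).2)) * len i := by
    intro γ i
    show (∫ t in (0:ℝ)..1,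
          ((C1 γ (a (i + 1) + t • (a (i + 2) - a (i + 1)))).1 * (n i).1
            + (C1 γ (a (i + 1) + t • (a (i + 2) - a (i + 1)))).2.2 * (n i).2)) * len i = _
    congr 1
    apply const_interval_int_aux
    intro t
    show ((k : ℝ) * γ.1 + γ.2.1 * (a (i + 1) + t • (a (i + 2) - a (i + 1))).1) * (n i).1
        + (γ.2.2.2 + γ.2.1 * (a (i + 1) + t • (a (i + 2) - a (i + 1))).2) * (n i).2 = _
    have hp := hperp i
    simp only [Prod.fst_sub, Prod.snd_sub] at hp
    simp only [Prod.fst_add, Prod.snd_add, Prod.smul_fst, Prod.smul_snd, smul_eq_mul,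
      Prod.fst_sub, Prod.snd_sub]
    linear_combination γ.2.1 * t * hp
  -- linearity
  have hlin : IsLinearMap ℝ Φ := by
    constructor
    · intro u v
      show (σK (u+v), σe (u+v) 0, σe (u+v) 1, σe (u+v) 2)
          = (σK u, σe u 0, σe u 1, σe u 2) + (σK v, σe v 0, σe v 1, σe v 2)
      simp only [hσK, hσe, Prod.fst_add, Prod.snd_add, Prod.mk_add_mk, Prod.mk.injEq]
      refine ⟨by ring, by ring, by ring, by ring⟩
    · intro c u
      show (σK (c • u), σe (c • u) 0, σe (c • u) 1, σe (c • u) 2)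
          = c • (σK u, σe u 0, σe u 1, σe u 2)
      simp only [hσK, hσe, Prod.smul_fst, Prod.smul_snd, smul_eq_mul, Prod.smul_mk,
        Prod.mk.injEq]
      refine ⟨by ring, by ring, by ring, by ring⟩
  -- kernel is trivial
  have hker : ∀ γ : ℝ × ℝ × ℝ × ℝ, Φ γ = 0 → γ = 0 := by
    intro γ h0
    have h0' : σK γ = 0 ∧ σe γ 0 = 0 ∧ σe γ 1 = 0 ∧ σe γ 2 = 0 := by
      have : (σK γ, σe γ 0, σe γ 1, σe γ 2) = ((0:ℝ), (0:ℝ), (0:ℝ), (0:ℝ)) := h0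
      simpa [Prod.ext_iff] using this
    obtain ⟨h1, h2, h3, h4⟩ := h0'
    rw [hσK] at h1
    rw [hσe] at h2 h3 h4
    -- edge lengths are positive
    have hlen : ∀ i : Fin 3, len i ≠ 0 := by
      intro i
      have hne : a (i+2) ≠ a (i+1) := by
        intro h
        have := hinj h
        have h2 : (2 : Fin 3) = 1 := by
          have := add_left_cancel this
          exact this
        exact absurd h2 (by decide)
      have hne' : (a (i+2) - a (i+1)).1 ≠ 0 ∨ (a (i+2) - a (i+1)).2 ≠ 0 := by
        by_contra hq
        push_neg at hq
        exact hne (sub_eq_zero.mp (Prod.ext hq.1 hq.2))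
      have hposs : 0 < (a (i + 2) - a (i + 1)).1 ^ 2 + (a (i + 2) - a (i + 1)).2 ^ 2 := by
        rcases hne' with h | h
        · nlinarith [sq_nonneg (a (i+2) - a (i+1)).2, sq_pos_of_ne_zero h]
        · nlinarith [sq_nonneg (a (i+2) - a (i+1)).1, sq_pos_of_ne_zero h]
      show Real.sqrt _ ≠ 0
      exact (Real.sqrt_pos.mpr hposs).ne'
    have E0 : (k:ℝ)*γ.1*(n 0).1 + γ.2.2.2*(n 0).2
        + γ.2.1*((a (0+1)).1*(n 0).1 + (a (0+1)).2*(n 0).2) = 0 :=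
      (mul_eq_zero.mp h2).resolve_right (hlen 0)
    have E1 : (k:ℝ)*γ.1*(n 1).1 + γ.2.2.2*(n 1).2
        + γ.2.1*((a (1+1)).1*(n 1).1 + (a (1+1)).2*(n 1).2) = 0 :=
      (mul_eq_zero.mp h3).resolve_right (hlen 1)
    have E2 : (k:ℝ)*γ.1*(n 2).1 + γ.2.2.2*(n 2).2
        + γ.2.1*((a (2+1)).1*(n 2).1 + (a (2+1)).2*(n 2).2) = 0 :=
      (mul_eq_zero.mp h4).resolve_right (hlen 2)
    have hp0 := hperp 0
    have hp1 := hperp 1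
    have hp2 := hperp 2
    simp only [show ((0:Fin 3)+1 = 1) from rfl, show ((0:Fin 3)+2 = 2) from rfl,
      show ((1:Fin 3)+1 = 2) from rfl, show ((1:Fin 3)+2 = 0) from rfl,
      show ((2:Fin 3)+1 = 0) from rfl, show ((2:Fin 3)+2 = 1) from rfl,
      Prod.fst_sub, Prod.snd_sub] at E0 E1 E2 hp0 hp1 hp2
    -- at vertex a 0 : E'' for edge 1, E' for edge 2
    have hA : ((k:ℝ)*γ.1 + γ.2.1*(a 0).1)*(n 1).1 + (γ.2.2.2 + γ.2.1*(a 0).2)*(n 1).2 = 0 := by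
      linear_combination E1 + γ.2.1 * hp1
    have hB : ((k:ℝ)*γ.1 + γ.2.1*(a 0).1)*(n 2).1 + (γ.2.2.2 + γ.2.1*(a 0).2)*(n 2).2 = 0 := by
      linear_combination E2
    -- at vertex a 1 : E' for edge 0, E'' for edge 2
    have hC : ((k:ℝ)*γ.1 + γ.2.1*(a 1).1)*(n 0).1 + (γ.2.2.2 + γ.2.1*(a 1).2)*(n 0).2 = 0 := by
      linear_combination E0
    have hD : ((k:ℝ)*γ.1 + γ.2.1*(a 1).1)*(n 2).1 + (γ.2.2.2 + γ.2.1*(a 1).2)*(n 2).2 = 0 := by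
      linear_combination E2 + γ.2.1 * hp2
    -- perpendicular directions
    have c1 := perp_perp_aux _ _ _ _ _ _ (hunit 1) hA hp1
    have c2 := perp_perp_aux _ _ _ _ _ _ (hunit 2) hB hp2
    have c3 := perp_perp_aux _ _ _ _ _ _ (hunit 0) hC hp0
    have c4 := perp_perp_aux _ _ _ _ _ _ (hunit 2) hD hp2
    have hCne := tri_cross_aux a haff
    -- w0 = 0
    have hw0x : ((k:ℝ)*γ.1 + γ.2.1*(a 0).1) = 0 := by
      have : ((k:ℝ)*γ.1 + γ.2.1*(a 0).1)
          * (((a 1).1 - (a 0).1) * ((a 2).2 - (a 0).2)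
            - ((a 1).2 - (a 0).2) * ((a 2).1 - (a 0).1)) = 0 := by
        linear_combination (-((a 1).1 - (a 0).1))*c1 - ((a 2).1 - (a 0).1)*c2
      exact (mul_eq_zero.mp this).resolve_right hCne
    have hw0y : (γ.2.2.2 + γ.2.1*(a 0).2) = 0 := by
      have : (γ.2.2.2 + γ.2.1*(a 0).2)
          * (((a 1).1 - (a 0).1) * ((a 2).2 - (a 0).2)
            - ((a 1).2 - (a 0).2) * ((a 2).1 - (a 0).1)) = 0 := by
        linear_combination (-((a 1).2 - (a 0).2))*c1 - ((a 2).2 - (a 0).2)*c2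
      exact (mul_eq_zero.mp this).resolve_right hCne
    -- w1 = 0
    have hw1x : ((k:ℝ)*γ.1 + γ.2.1*(a 1).1) = 0 := by
      have : ((k:ℝ)*γ.1 + γ.2.1*(a 1).1)
          * (((a 1).1 - (a 0).1) * ((a 2).2 - (a 0).2)
            - ((a 1).2 - (a 0).2) * ((a 2).1 - (a 0).1)) = 0 := by
        linear_combination ((a 1).1 - (a 0).1)*c3
          + (((a 1).1 - (a 0).1) - ((a 2).1 - (a 0).1))*c4
      exact (mul_eq_zero.mp this).resolve_right hCne
    -- β = 0
    have hβ : γ.2.1 = 0 := by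
      have hne01 : a 0 ≠ a 1 := fun h => absurd (hinj h) (by decide)
      have hd : (a 0).1 ≠ (a 1).1 ∨ (a 0).2 ≠ (a 1).2 := by
        by_contra hq
        push_neg at hq
        exact hne01 (Prod.ext hq.1 hq.2)
      rcases hd with h | h
      · have hb : γ.2.1 * ((a 0).1 - (a 1).1) = 0 := by linear_combination hw0x - hw1x
        exact (mul_eq_zero.mp hb).resolve_right (sub_ne_zero.mpr h)
      · -- use y-components:  w0y - w1y = β ((a 0).2 - (a 1).2)
        have hw1y : (γ.2.2.2 + γ.2.1*(a 1).2) = 0 := by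
          have : (γ.2.2.2 + γ.2.1*(a 1).2)
              * (((a 1).1 - (a 0).1) * ((a 2).2 - (a 0).2)
                - ((a 1).2 - (a 0).2) * ((a 2).1 - (a 0).1)) = 0 := by
            linear_combination ((a 1).2 - (a 0).2)*c3
              + (((a 1).2 - (a 0).2) - ((a 2).2 - (a 0).2))*c4
          exact (mul_eq_zero.mp this).resolve_right hCne
        have hb : γ.2.1 * ((a 0).2 - (a 1).2) = 0 := by linear_combination hw0y - hw1y
        exact (mul_eq_zero.mp hb).resolve_right (sub_ne_zero.mpr h)
    have hkne : (k:ℝ) ≠ 0 := Int.cast_ne_zero.mpr hk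
    have hγ1 : γ.1 = 0 := by
      have : (k:ℝ) * γ.1 = 0 := by linear_combination hw0x - (a 0).1 * hβ
      exact (mul_eq_zero.mp this).resolve_left hkne
    have hγ4 : γ.2.2.2 = 0 := by linear_combination hw0y - (a 0).2 * hβ
    have hγ3 : γ.2.2.1 = 0 := by
      have : (k:ℝ) * γ.2.2.1 = 0 := by linear_combination h1 + hβ
      exact (mul_eq_zero.mp this).resolve_left hkne
    exact Prod.ext hγ1 (Prod.ext hβ (Prod.ext hγ3 hγ4))
  -- conclude
  have hLinj : Function.Injective (IsLinearMap.mk' Φ hlin) := by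
    intro u v huv
    have h0 : (IsLinearMap.mk' Φ hlin) (u - v) = 0 := by rw [map_sub, huv, sub_self]
    exact sub_eq_zero.mp (hker (u - v) (by simpa using h0))
  have hLsurj : Function.Surjective (IsLinearMap.mk' Φ hlin) :=
    LinearMap.injective_iff_surjective.mp hLinj
  refine ⟨hlin, ?_, ?_⟩
  · intro u v huv
    exact hLinj (by simpa using huv)
  · intro y
    obtain ⟨x, hx⟩ := hLsurj y
    exact ⟨x, by simpa using hx⟩
end

section
/- Let Λ: V → V be a bounded, symmetric, positive-definite linear operator on a finite-dimensional inner product space V, and let V = Σ_{j=1}^N V_j be a decomposition into subspaces. Suppose (1) stable decomposition: every v ∈ V admits v = Σ v_j with v_j ∈ V_j and Σ_j ⟨Λv_j, v_j⟩ ≤ C₁⟨Λv, v⟩; and (2) limited interaction: Σ_{j,m} |⟨Λv_j, w_m⟩| ≤ C₂ (Σ_j⟨Λv_j,v_j⟩)^{1/2} (Σ_m⟨Λw_m,w_m⟩)^{1/2} for all v_j ∈ V_j, w_m ∈ V_m. Let P_j denote the Λ-orthogonal projection onto V_j and E = (I − P_N)(I − P_{N−1})⋯(I − P_1). Then there exists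 δ < 1 depending only on C₁ and C₂ such that ⟨ΛEv, Ev⟩ ≤ δ ⟨Λv, v⟩ for all v ∈ V. -/
/-- abstract multiplicative Schwarz convergence. Stable decomposition
(constant C₁) and limited interaction (constant C₂) imply that the error operator
E = (I − P_N)⋯(I − P_1) of the multiplicative method satisfies
⟨ΛEv, Ev⟩ ≤ δ ⟨Λv, v⟩ with δ < 1 depending only on C₁ and C₂. -/
theorem stmt_10 (C1 C2 : ℝ) (hC1 : 0 < C1) (hC2 : 0 < C2) :
    ∃ δ : ℝ, 0 ≤ δ ∧ δ < 1 ∧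
      ∀ (V : Type) [inst : NormedAddCommGroup V] [inst2 : InnerProductSpace ℝ V],
      FiniteDimensional ℝ V →
      ∀ (N : ℕ) (Vj : Fin N → Submodule ℝ V) (Λ : V →ₗ[ℝ] V),
      (∀ u v : V, (inner ℝ (Λ u) v : ℝ) = inner ℝ u (Λ v)) →
      (∀ v : V, v ≠ 0 → (0 : ℝ) < inner ℝ (Λ v) v) →
      ∀ (P : Fin N → Module.End ℝ V),
      (∀ j v, P j v ∈ Vj j) →
      (∀ j (v : V), ∀ w ∈ Vj j, (inner ℝ (Λ (v - P j v)) w : ℝ) = 0) →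
      -- stable decomposition
      (∀ v : V, ∃ vj : Fin N → V, (∀ j, vj j ∈ Vj j) ∧ v = ∑ j, vj j ∧
        ∑ j, (inner ℝ (Λ (vj j)) (vj j) : ℝ) ≤ C1 * inner ℝ (Λ v) v) →
      -- limited interaction
      (∀ vj wj : Fin N → V, (∀ j, vj j ∈ Vj j) → (∀ j, wj j ∈ Vj j) →
        ∑ j, ∑ m, |(inner ℝ (Λ (vj j)) (wj m) : ℝ)| ≤
          C2 * Real.sqrt (∑ j, (inner ℝ (Λ (vj j)) (vj j) : ℝ)) *
            Real.sqrt (∑ m, (inner ℝ (Λ (wj m)) (wj m) : ℝ))) →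
      ∀ E : Module.End ℝ V,
      E = ((List.ofFn (fun j : Fin N => (1 : Module.End ℝ V) - P j)).reverse).prod →
      ∀ v : V, (inner ℝ (Λ (E v)) (E v) : ℝ) ≤ δ * inner ℝ (Λ v) v := by
  classical
  set K : ℝ := C1 * (1 + C2) ^ 2 with hK
  have hKpos : 0 < K := by positivity
  clear_value K
  refine ⟨K / (1 + K), by positivity, ?_, ?_⟩
  · rw [div_lt_one (by linarith)]; linarith
  intro V _ _ _ N Vj Λ hsym hpos P hPmem horth hstable hinter E hE v
  -- basic facts about the bilinear form a x y = ⟨Λx, y⟩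
  have a_symm : ∀ x y : V, (inner ℝ (Λ x) y : ℝ) = inner ℝ (Λ y) x := by
    intro x y; rw [hsym, real_inner_comm]
  have a_nonneg : ∀ x : V, (0:ℝ) ≤ inner ℝ (Λ x) x := by
    intro x
    by_cases h : x = 0
    · simp [h]
    · exact (hpos x h).le
  have aCS : ∀ x y : V, (inner ℝ (Λ x) y : ℝ) ^ 2 ≤ inner ℝ (Λ x) x * inner ℝ (Λ y) y := by
    intro x y
    by_cases hy : y = 0
    · simp [hy]
    have hq : (0:ℝ) < inner ℝ (Λ y) y := hpos y hy
    have h0 := a_nonneg ((inner ℝ (Λ y) y : ℝ) • x - (inner ℝ (Λ x) y : ℝ) • y)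
    have hx1 := a_symm x y
    simp only [map_sub, map_smul, inner_sub_left, inner_sub_right,
      real_inner_smul_left, real_inner_smul_right] at h0
    rw [← hx1] at h0
    nlinarith [hq, sq_nonneg ((inner ℝ (Λ x) y : ℝ))]
  have aCS' : ∀ x y : V, (inner ℝ (Λ x) y : ℝ) ≤
      Real.sqrt ((inner ℝ (Λ x) x : ℝ)) * Real.sqrt ((inner ℝ (Λ y) y : ℝ)) := by
    intro x y
    have h1 := aCS x y
    have h2 : Real.sqrt ((inner ℝ (Λ x) x : ℝ)) * Real.sqrt ((inner ℝ (Λ y) y : ℝ)) ≥ 0 := by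
      positivity
    nlinarith [Real.sq_sqrt (a_nonneg x), Real.sq_sqrt (a_nonneg y),
      Real.sqrt_nonneg ((inner ℝ (Λ x) x : ℝ)), Real.sqrt_nonneg ((inner ℝ (Λ y) y : ℝ)),
      sq_nonneg ((inner ℝ (Λ x) y : ℝ) -
        Real.sqrt ((inner ℝ (Λ x) x : ℝ)) * Real.sqrt ((inner ℝ (Λ y) y : ℝ)))]
  by_cases hv0 : v = 0
  · subst hv0; simp
  -- the sequence of partial error iterates
  set f : Fin N → Module.End ℝ V := fun j => (1 : Module.End ℝ V) - P j with hf
  set L : List (Module.End ℝ V) := List.ofFn f with hL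
  set u : ℕ → V := fun k => ((L.take k).reverse).prod v with hu
  have hLlen : L.length = N := by simp [hL]
  have hu0 : u 0 = v := by simp [hu]
  have husucc : ∀ k (hk : k < N), u (k+1) = u k - P ⟨k, hk⟩ (u k) := by
    intro k hk
    have hk' : k < L.length := by rw [hLlen]; exact hk
    have h1 : L.take (k+1) = L.take k ++ [L[k]] := by
      rw [List.take_succ, List.getElem?_eq_getElem hk']
      simp
    have h2 : L[k] = f ⟨k, hk⟩ := by
      simp only [hL]
      rw [List.getElem_ofFn]
    calc u (k+1) = ((L.take (k+1)).reverse).prod v := rfl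
      _ = L[k] ((L.take k).reverse.prod v) := by
          rw [h1, List.reverse_append]
          simp [Module.End.mul_apply]
      _ = u k - P ⟨k, hk⟩ (u k) := by
          rw [h2]; simp [hf, hu, LinearMap.sub_apply]
  have huN : E v = u N := by
    have : L.take N = L := by rw [← hLlen]; exact List.take_length
    rw [hE, hu]; simp only [← hL, this]
  -- p k : the projections along the sweep
  set p : Fin N → V := fun j => P j (u j.1) with hp
  have hpmem : ∀ j, p j ∈ Vj j := fun j => hPmem j _
  -- orthogonality consequences
  have hstep : ∀ (j : Fin N) (w : V), w ∈ Vj j →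
      (inner ℝ (Λ (u j.1)) w : ℝ) = inner ℝ (Λ (p j)) w := by
    intro j w hw
    have h := horth j (u j.1) w hw
    rw [map_sub, inner_sub_left] at h
    linarith [h]
  have hdecrease : ∀ (j : Fin N),
      (inner ℝ (Λ (u (j.1+1))) (u (j.1+1)) : ℝ)
        = inner ℝ (Λ (u j.1)) (u j.1) - inner ℝ (Λ (p j)) (p j) := by
    intro j
    have hsu : u (j.1+1) = u j.1 - p j := husucc j.1 j.2
    have h1 : (inner ℝ (Λ (u j.1)) (p j) : ℝ) = inner ℝ (Λ (p j)) (p j) :=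
      hstep j (p j) (hpmem j)
    have h2 : (inner ℝ (Λ (p j)) (u j.1) : ℝ) = inner ℝ (Λ (p j)) (p j) := by
      rw [a_symm]; exact h1
    rw [hsu, map_sub, inner_sub_left, inner_sub_right, inner_sub_right]
    linarith
  -- telescoping the energy
  have hqdef : ∀ k : ℕ, ∃ r : ℝ, True := fun _ => ⟨0, trivial⟩
  set q : ℕ → ℝ := fun k => if h : k < N then
      (inner ℝ (Λ (p ⟨k, h⟩)) (p ⟨k, h⟩) : ℝ) else 0 with hq
  have htel : ∀ k, k ≤ N →
      (inner ℝ (Λ v) v : ℝ) - inner ℝ (Λ (u k)) (u k) = ∑ i ∈ Finset.range k, q i := by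
    intro k hk
    induction k with
    | zero => simp [hu0]
    | succ n ih =>
      have hn : n < N := hk
      have := hdecrease ⟨n, hn⟩
      rw [Finset.sum_range_succ, ← ih (le_of_lt hn)]
      simp only [hq, dif_pos hn]
      simp only [hp] at this ⊢
      linarith [this]
  have hsum_q : ∑ i ∈ Finset.range N, q i = ∑ j : Fin N, (inner ℝ (Λ (p j)) (p j) : ℝ) := by
    rw [← Fin.sum_univ_eq_sum_range]
    apply Finset.sum_congr rfl
    intro j _
    simp [hq, j.2]
  set Spp : ℝ := ∑ j : Fin N, (inner ℝ (Λ (p j)) (p j) : ℝ) with hSpp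
  have hSpp_nonneg : 0 ≤ Spp := Finset.sum_nonneg fun j _ => a_nonneg _
  have henergy : (inner ℝ (Λ v) v : ℝ) - inner ℝ (Λ (E v)) (E v) = Spp := by
    rw [huN, htel N le_rfl, hsum_q]
  -- telescoping the vector
  set pv : ℕ → V := fun k => if h : k < N then p ⟨k, h⟩ else 0 with hpv
  have hvtel : ∀ k, k ≤ N → v - u k = ∑ i ∈ Finset.range k, pv i := by
    intro k hk
    induction k with
    | zero => simp [hu0]
    | succ n ih =>
      have hn : n < N := hk
      rw [Finset.sum_range_succ, ← ih (le_of_lt hn)]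
      have := husucc n hn
      simp only [hpv, dif_pos hn, hp]
      rw [this]
      abel
  -- stable decomposition of v
  clear_value f L u q pv
  clear_value p
  obtain ⟨vj, hvjmem, hvsum, hvstab⟩ := hstable v
  set A : ℝ := ∑ j : Fin N, (inner ℝ (Λ (vj j)) (vj j) : ℝ) with hA
  have hA_nonneg : 0 ≤ A := Finset.sum_nonneg fun j _ => a_nonneg _
  set T : ℝ := (inner ℝ (Λ v) v : ℝ) with hT
  have hTpos : 0 < T := hpos v hv0
  clear_value A T Spp
  -- split a(v, v) = Σ_j a(vj j, u j) + Σ_j a(vj j, v - u j)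
  have hsplit : T = (∑ j : Fin N, (inner ℝ (Λ (vj j)) (u j.1) : ℝ))
      + ∑ j : Fin N, (inner ℝ (Λ (vj j)) (v - u j.1) : ℝ) := by
    rw [← Finset.sum_add_distrib]
    have : ∀ j : Fin N, (inner ℝ (Λ (vj j)) (u j.1) : ℝ) + inner ℝ (Λ (vj j)) (v - u j.1)
        = inner ℝ (Λ (vj j)) v := by
      intro j; rw [inner_sub_right]; ring
    rw [Finset.sum_congr rfl fun j _ => this j]
    rw [hT]
    conv_lhs => rw [hvsum]
    rw [map_sum, sum_inner, ← hvsum]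
  -- first term bound
  have hterm1 : (∑ j : Fin N, (inner ℝ (Λ (vj j)) (u j.1) : ℝ))
      ≤ Real.sqrt A * Real.sqrt Spp := by
    have h1 : ∀ j : Fin N, (inner ℝ (Λ (vj j)) (u j.1) : ℝ) = inner ℝ (Λ (vj j)) (p j) := by
      intro j
      rw [a_symm, hstep j (vj j) (hvjmem j), a_symm]
    rw [Finset.sum_congr rfl fun j _ => h1 j]
    have h2 : ∀ j : Fin N, (inner ℝ (Λ (vj j)) (p j) : ℝ) ≤
        Real.sqrt ((inner ℝ (Λ (vj j)) (vj j) : ℝ)) * Real.sqrt ((inner ℝ (Λ (p j)) (p j) : ℝ)) :=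
      fun j => aCS' _ _
    calc ∑ j : Fin N, (inner ℝ (Λ (vj j)) (p j) : ℝ)
        ≤ ∑ j : Fin N, Real.sqrt ((inner ℝ (Λ (vj j)) (vj j) : ℝ)) *
            Real.sqrt ((inner ℝ (Λ (p j)) (p j) : ℝ)) := Finset.sum_le_sum fun j _ => h2 j
      _ ≤ Real.sqrt A * Real.sqrt Spp := by
          rw [← Real.sqrt_mul hA_nonneg]
          rw [Real.le_sqrt (Finset.sum_nonneg fun (j : Fin N) _ => by positivity)
            (mul_nonneg hA_nonneg hSpp_nonneg)]
          calc (∑ j : Fin N, Real.sqrt ((inner ℝ (Λ (vj j)) (vj j) : ℝ)) *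
                Real.sqrt ((inner ℝ (Λ (p j)) (p j) : ℝ))) ^ 2
              ≤ (∑ j : Fin N, Real.sqrt ((inner ℝ (Λ (vj j)) (vj j) : ℝ)) ^ 2) *
                ∑ j : Fin N, Real.sqrt ((inner ℝ (Λ (p j)) (p j) : ℝ)) ^ 2 :=
                Finset.sum_mul_sq_le_sq_mul_sq _ _ _
            _ = A * Spp := by
                rw [hA, hSpp]
                congr 1
                · exact Finset.sum_congr rfl fun j _ => Real.sq_sqrt (a_nonneg _)
                · exact Finset.sum_congr rfl fun j _ => Real.sq_sqrt (a_nonneg _)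
  -- second term bound
  have hterm2 : (∑ j : Fin N, (inner ℝ (Λ (vj j)) (v - u j.1) : ℝ))
      ≤ C2 * Real.sqrt A * Real.sqrt Spp := by
    have h1 : ∀ j : Fin N, (inner ℝ (Λ (vj j)) (v - u j.1) : ℝ)
        = ∑ i ∈ Finset.range j.1, (inner ℝ (Λ (vj j)) (pv i) : ℝ) := by
      intro j
      rw [hvtel j.1 (le_of_lt j.2), inner_sum]
    have h2 : ∀ j : Fin N, (∑ i ∈ Finset.range j.1, (inner ℝ (Λ (vj j)) (pv i) : ℝ))
        ≤ ∑ m : Fin N, |(inner ℝ (Λ (vj j)) (p m) : ℝ)| := by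
      intro j
      have hsub : Finset.range j.1 ⊆ Finset.range N := Finset.range_subset_range.2 (le_of_lt j.2)
      calc (∑ i ∈ Finset.range j.1, (inner ℝ (Λ (vj j)) (pv i) : ℝ))
          ≤ ∑ i ∈ Finset.range j.1, |(inner ℝ (Λ (vj j)) (pv i) : ℝ)| :=
            Finset.sum_le_sum fun i _ => le_abs_self _
        _ ≤ ∑ i ∈ Finset.range N, |(inner ℝ (Λ (vj j)) (pv i) : ℝ)| :=
            Finset.sum_le_sum_of_subset_of_nonneg hsub fun i _ _ => abs_nonneg _
        _ = ∑ m : Fin N, |(inner ℝ (Λ (vj j)) (p m) : ℝ)| := by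
            rw [← Fin.sum_univ_eq_sum_range (fun i => |(inner ℝ (Λ (vj j)) (pv i) : ℝ)|)]
            apply Finset.sum_congr rfl
            intro m _
            simp [hpv, m.2]
    calc (∑ j : Fin N, (inner ℝ (Λ (vj j)) (v - u j.1) : ℝ))
        ≤ ∑ j : Fin N, ∑ m : Fin N, |(inner ℝ (Λ (vj j)) (p m) : ℝ)| := by
          rw [Finset.sum_congr rfl fun j _ => h1 j]
          exact Finset.sum_le_sum fun j _ => h2 j
      _ ≤ C2 * Real.sqrt A * Real.sqrt Spp := by
          rw [hA, hSpp]; exact hinter vj p hvjmem hpmem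
  -- combine: T ≤ (1 + C2) √A √Spp ≤ (1+C2)√(C1 T) √Spp
  have hmain : T ≤ (1 + C2) * Real.sqrt A * Real.sqrt Spp := by
    rw [hsplit]; nlinarith [hterm1, hterm2]
  have hAle : A ≤ C1 * T := hvstab
  have hsqA : Real.sqrt A ≤ Real.sqrt C1 * Real.sqrt T := by
    rw [← Real.sqrt_mul hC1.le]
    exact Real.sqrt_le_sqrt hAle
  have hmain2 : T ≤ (1 + C2) * (Real.sqrt C1 * Real.sqrt T) * Real.sqrt Spp := by
    calc T ≤ (1 + C2) * Real.sqrt A * Real.sqrt Spp := hmain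
      _ ≤ (1 + C2) * (Real.sqrt C1 * Real.sqrt T) * Real.sqrt Spp := by
          apply mul_le_mul_of_nonneg_right _ (Real.sqrt_nonneg _)
          apply mul_le_mul_of_nonneg_left hsqA (by linarith)
  -- square it: T ≤ K * Spp
  have hTK : T ≤ K * Spp := by
    have hsT : Real.sqrt T > 0 := Real.sqrt_pos.2 hTpos
    have hsT2 : Real.sqrt T ^ 2 = T := Real.sq_sqrt hTpos.le
    have hsC2 : Real.sqrt C1 ^ 2 = C1 := Real.sq_sqrt hC1.le
    have hsS2 : Real.sqrt Spp ^ 2 = Spp := Real.sq_sqrt hSpp_nonneg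
    have h1 : Real.sqrt T ≤ (1 + C2) * Real.sqrt C1 * Real.sqrt Spp := by
      have hT' : Real.sqrt T * Real.sqrt T
          ≤ ((1 + C2) * Real.sqrt C1 * Real.sqrt Spp) * Real.sqrt T := by
        calc Real.sqrt T * Real.sqrt T = T := Real.mul_self_sqrt hTpos.le
          _ ≤ (1 + C2) * (Real.sqrt C1 * Real.sqrt T) * Real.sqrt Spp := hmain2
          _ = ((1 + C2) * Real.sqrt C1 * Real.sqrt Spp) * Real.sqrt T := by ring
      exact le_of_mul_le_mul_right hT' hsT
    calc T = Real.sqrt T ^ 2 := hsT2.symm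
      _ ≤ ((1 + C2) * Real.sqrt C1 * Real.sqrt Spp) ^ 2 :=
          pow_le_pow_left₀ (Real.sqrt_nonneg T) h1 2
      _ = C1 * (1 + C2) ^ 2 * Spp := by rw [mul_pow, mul_pow, hsC2, hsS2]; ring
      _ = K * Spp := by rw [hK]
  -- conclude
  have hEle : (inner ℝ (Λ (E v)) (E v) : ℝ) ≤ T := by
    rw [hT]; linarith [henergy, hSpp_nonneg]
  have hfinal : (1 + K) * (inner ℝ (Λ (E v)) (E v) : ℝ) ≤ K * T := by
    have h1 : T ≤ K * (T - inner ℝ (Λ (E v)) (E v)) := by rw [← henergy] at hTK; exact hTK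
    have h3 : K * (T - (inner ℝ (Λ (E v)) (E v) : ℝ))
        = K * T - K * inner ℝ (Λ (E v)) (E v) := by ring
    have h4 : (1 + K) * (inner ℝ (Λ (E v)) (E v) : ℝ)
        = inner ℝ (Λ (E v)) (E v) + K * inner ℝ (Λ (E v)) (E v) := by ring
    rw [h4]
    rw [h3] at h1
    linarith [hEle]
  have h2 : K / (1 + K) * T = K * T / (1 + K) := by ring
  rw [h2, le_div_iff₀ (by linarith : (0:ℝ) < 1 + K)]
  linarith [hfinal]
end

section
/- In the setting of the abstract mixed problem above with f ∈ Q_h, let Π^S_h: Q → Q_h be the orthogonal projection. Let (ε_z, ε_p) and (ε_{z,h}, ε_{p,h}) solve the continuous and discrete mixed problems with data g = Π^S_h p − p_h ∈ Q_h. Then ‖Π^S_h p − p_h‖² = (z − z_h, ε_{z,h} − ε_z), and hence ‖Π^S_h p − p_h‖ ≤ ‖z − z_h‖ · ‖ε_z − ε_{z,h}‖ / ‖Π^S_h p − p_h‖ whenever Π^S_h p ≠ p_h; equivalently ‖Π^S_h p − p_h‖² ≤ ‖z − z_h‖ ‖ε_z − ε_{z,h}‖. -/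
/-- duality (Aubin–Nitsche) identity for the abstract mixed method:
with g = Π^S_h p − p_h as data for the auxiliary continuous/discrete problems,
‖Π^S_h p − p_h‖² = (z − z_h, ε_{z,h} − ε_z) ≤ ‖z − z_h‖ ‖ε_z − ε_{z,h}‖. -/
theorem stmt_13 {H Q : Type*} [NormedAddCommGroup H] [InnerProductSpace ℝ H]
    [NormedAddCommGroup Q] [InnerProductSpace ℝ Q]
    (dvg : H →L[ℝ] Q) (Hh : Submodule ℝ H) (Qh : Submodule ℝ Q)
    (hdivsub : ∀ w ∈ Hh, dvg w ∈ Qh)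
    (z : H) (p : Q) (zh : H) (ph : Q) (f : Q)
    (hzh : zh ∈ Hh) (hph : ph ∈ Qh) (hf : f ∈ Qh)
    (hc1 : ∀ w : H, (inner ℝ z w : ℝ) - inner ℝ (dvg w) p = 0)
    (hc2 : ∀ s : Q, (inner ℝ (dvg z) s : ℝ) = inner ℝ f s)
    (hd1 : ∀ w ∈ Hh, (inner ℝ zh w : ℝ) - inner ℝ (dvg w) ph = 0)
    (hd2 : ∀ s ∈ Qh, (inner ℝ (dvg zh) s : ℝ) = inner ℝ f s)
    -- Π^S_h p : orthogonal projection of p onto Q_h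
    (Pp : Q) (hPpmem : Pp ∈ Qh) (hPp : ∀ s ∈ Qh, (inner ℝ (p - Pp) s : ℝ) = 0)
    -- auxiliary continuous problem with data g = Pp − ph
    (εz : H) (εp : Q)
    (he1 : ∀ w : H, (inner ℝ εz w : ℝ) - inner ℝ (dvg w) εp = 0)
    (he2 : ∀ s : Q, (inner ℝ (dvg εz) s : ℝ) = inner ℝ (Pp - ph) s)
    -- auxiliary discrete problem with data g = Pp − ph
    (εzh : H) (εph : Q) (hεzh : εzh ∈ Hh) (hεph : εph ∈ Qh)
    (he1h : ∀ w ∈ Hh, (inner ℝ εzh w : ℝ) - inner ℝ (dvg w) εph = 0)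
    (he2h : ∀ s ∈ Qh, (inner ℝ (dvg εzh) s : ℝ) = inner ℝ (Pp - ph) s) :
    ‖Pp - ph‖ ^ 2 = (inner ℝ (z - zh) (εzh - εz) : ℝ) ∧
    ‖Pp - ph‖ ^ 2 ≤ ‖z - zh‖ * ‖εz - εzh‖ := by
  -- div z = f
  have hzf : dvg z = f := by
    have h : ∀ s : Q, (inner ℝ (dvg z - f) s : ℝ) = 0 := by
      intro s; rw [inner_sub_left]; have := hc2 s; linarith
    have h2 := h (dvg z - f)
    rw [inner_self_eq_zero] at h2
    exact sub_eq_zero.mp h2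
  -- div zh = f
  have hzhf : dvg zh = f := by
    have hmem : dvg zh - f ∈ Qh := Submodule.sub_mem _ (hdivsub zh hzh) hf
    have h2 : (inner ℝ (dvg zh - f) (dvg zh - f) : ℝ) = 0 := by
      rw [inner_sub_left]; have := hd2 _ hmem; linarith
    rw [inner_self_eq_zero] at h2
    exact sub_eq_zero.mp h2
  have hg : Pp - ph ∈ Qh := Submodule.sub_mem _ hPpmem hph
  -- key identity
  have key : (inner ℝ (z - zh) (εzh - εz) : ℝ) = ‖Pp - ph‖ ^ 2 := by
    have h1 : (inner ℝ (z - zh) εz : ℝ) = 0 := by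
      have := he1 (z - zh)
      have hdz : dvg (z - zh) = 0 := by
        rw [map_sub, hzf, hzhf, sub_self]
      rw [hdz, inner_zero_left] at this
      rw [real_inner_comm]; linarith
    have hz : (inner ℝ z εzh : ℝ) = inner ℝ (dvg εzh) p := by
      have := hc1 εzh; linarith
    have hzh2 : (inner ℝ zh εzh : ℝ) = inner ℝ (dvg εzh) ph := by
      have := hd1 εzh hεzh; linarith
    have horth : (inner ℝ (dvg εzh) (p - Pp) : ℝ) = 0 := by
      rw [real_inner_comm]; exact hPp _ (hdivsub εzh hεzh)
    have hhe : (inner ℝ (dvg εzh) (Pp - ph) : ℝ) = inner ℝ (Pp - ph) (Pp - ph) :=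
      he2h _ hg
    have hsplit : (inner ℝ (dvg εzh) p : ℝ) - inner ℝ (dvg εzh) ph
        = inner ℝ (dvg εzh) (p - Pp) + inner ℝ (dvg εzh) (Pp - ph) := by
      rw [inner_sub_right, inner_sub_right]; ring
    have : (inner ℝ (z - zh) εzh : ℝ) = inner ℝ (Pp - ph) (Pp - ph) := by
      rw [inner_sub_left, hz, hzh2]
      rw [hsplit, horth, hhe]; ring
    rw [inner_sub_right, this, h1, sub_zero, real_inner_self_eq_norm_sq]
  refine ⟨key.symm, ?_⟩
  rw [← key]
  calc (inner ℝ (z - zh) (εzh - εz) : ℝ) ≤ ‖z - zh‖ * ‖εzh - εz‖ :=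
        real_inner_le_norm _ _
    _ = ‖z - zh‖ * ‖εz - εzh‖ := by rw [norm_sub_rev εzh εz]
end
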